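/- The set X = {1/j : j ∈ ℕ, j ≥ 1} ⊂ ℝ satisfies property PS(2, t^α) for every α > 0: for each ε > 0 there is a family of intervals (balls in ℝ) B(z_j, r_j) covering X, with B(z_j, r_j) ∩ B(z_k, 2 r_k) = ∅ for j ≠ k, and ∑_j r_j^α < ε. -/

import Mathlib

lemma stmt14_aux (a b : ℝ) (ha : 0 ≤ a) (hab : a + 1 ≤ b) :
    max (1 / ((a + 1) * (a + 2))) (1 / ((b + 1) * (b + 2))) ≤ 1 / (a + 1) - 1 / (b + 1) := by
  have hb : 0 < b := by linarith
  have ha1 : (0:ℝ) < a + 1 := by linarith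
  have hb1 : (0:ℝ) < b + 1 := by linarith
  rw [max_le_iff]
  constructor
  · have h1 : (1:ℝ) / ((a + 1) * (a + 2)) = 1 / (a + 1) - 1 / (a + 2) := by
      field_simp; ring
    rw [h1]
    have : (1:ℝ) / (b + 1) ≤ 1 / (a + 2) := by
      apply one_div_le_one_div_of_le (by linarith) (by linarith)
    linarith
  · have h2 : (1:ℝ) / ((b + 1) * (b + 2)) ≤ 1 / (b * (b + 1)) := by
      apply one_div_le_one_div_of_le (by positivity)
      nlinarith
    have h3 : (1:ℝ) / (b * (b + 1)) = 1 / b - 1 / (b + 1) := by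
      field_simp; ring
    have h4 : (1:ℝ) / b ≤ 1 / (a + 1) := one_div_le_one_div_of_le ha1 hab
    linarith

theorem stmt14 (α : ℝ) (hα : 0 < α) :
    ∀ ε : ℝ, 0 < ε →
      ∃ z r : ℕ → ℝ, (∀ j, 0 < r j) ∧
        ({x : ℝ | ∃ j : ℕ, 1 ≤ j ∧ x = 1 / j} ⊆ ⋃ j, Metric.ball (z j) (r j)) ∧
        (∀ j k, j ≠ k → Disjoint (Metric.ball (z j) (r j)) (Metric.ball (z k) (2 * r k))) ∧
        Summable (fun j => r j ^ α) ∧ ∑' j, r j ^ α < ε := by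
  intro ε hε
  set q : ℝ := (1/2 : ℝ) ^ α with hq
  have hq0 : 0 < q := Real.rpow_pos_of_pos (by norm_num) α
  have hq1 : q < 1 := Real.rpow_lt_one (by norm_num) (by norm_num) hα
  set C : ℝ := ε * (1 - q) / 2 with hCdef
  have hC : 0 < C := by
    have : 0 < 1 - q := by linarith
    positivity
  set c : ℝ := C ^ (1/α) with hcdef
  have hc : 0 < c := Real.rpow_pos_of_pos hC _
  set g : ℕ → ℝ := fun n => 1 / (((n:ℝ) + 1) * ((n:ℝ) + 2)) with hg
  have hgpos : ∀ n, 0 < g n := fun n => by positivity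
  set z : ℕ → ℝ := fun j => 1 / ((j:ℝ) + 1) with hz
  set r : ℕ → ℝ := fun j => min (g j) (c * (1/2)^j) / 3 with hr
  have hrpos : ∀ j, 0 < r j := by
    intro j
    apply div_pos _ (by norm_num)
    exact lt_min (hgpos j) (mul_pos hc (by positivity))
  have hrg : ∀ j, r j ≤ g j / 3 := by
    intro j
    exact div_le_div_of_nonneg_right (min_le_left _ _) (by norm_num)
  -- distance lower bound
  have hdist : ∀ j k : ℕ, j ≠ k → max (g j) (g k) ≤ dist (z j) (z k) := by
    have base : ∀ j k : ℕ, j < k → max (g j) (g k) ≤ dist (z j) (z k) := by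
      intro j k hjk
      have hjk' : (j:ℝ) + 1 ≤ (k:ℝ) := by exact_mod_cast hjk
      have := stmt14_aux (j:ℝ) (k:ℝ) (Nat.cast_nonneg j) hjk'
      rw [Real.dist_eq]
      calc max (g j) (g k) ≤ 1 / ((j:ℝ) + 1) - 1 / ((k:ℝ) + 1) := this
        _ ≤ |z j - z k| := by
            rw [hz]; exact le_abs_self _
    intro j k hjk
    rcases lt_or_gt_of_ne hjk with h | h
    · exact base j k h
    · rw [max_comm, dist_comm]; exact base k j h
  refine ⟨z, r, hrpos, ?_, ?_, ?_, ?_⟩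
  · -- covering
    intro x hx
    obtain ⟨j, hj, rfl⟩ := hx
    obtain ⟨m, rfl⟩ := Nat.exists_eq_add_of_le hj
    apply Set.mem_iUnion.2 ⟨m, ?_⟩
    simp only [Metric.mem_ball, hz, Real.dist_eq]
    have : (1:ℝ) / ((1 + m : ℕ)) = 1 / ((m:ℝ) + 1) := by push_cast; ring_nf
    rw [this, sub_self, abs_zero]
    exact hrpos m
  · -- disjointness
    intro j k hjk
    apply Metric.ball_disjoint_ball
    have h1 := hrg j
    have h2 := hrg k
    have h3 := hdist j k hjk
    have hgj : g j ≤ max (g j) (g k) := le_max_left _ _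
    have hgk : g k ≤ max (g j) (g k) := le_max_right _ _
    linarith
  · -- summability
    apply Summable.of_nonneg_of_le (fun j => Real.rpow_nonneg (hrpos j).le α)
      (fun j => ?_) ((summable_geometric_of_lt_one hq0.le hq1).mul_left C)
    have hle : r j ≤ c * (1/2)^j := by
      have hnn : 0 ≤ min (g j) (c * (1/2:ℝ)^j) :=
        le_min (hgpos j).le (mul_nonneg hc.le (by positivity))
      have hmr := min_le_right (g j) (c * (1/2:ℝ)^j)
      rw [hr]
      dsimp only
      linarith
    calc r j ^ α ≤ (c * (1/2)^j) ^ α :=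
          Real.rpow_le_rpow (hrpos j).le hle hα.le
      _ = c ^ α * ((1/2:ℝ)^j) ^ α := Real.mul_rpow hc.le (by positivity)
      _ = C * q ^ j := by
          rw [hcdef, ← Real.rpow_natCast (1/2 : ℝ) j, ← Real.rpow_natCast q j, hq,
            ← Real.rpow_mul (by norm_num : (0:ℝ) ≤ 1/2),
            ← Real.rpow_mul (by norm_num : (0:ℝ) ≤ 1/2), mul_comm (j:ℝ) α,
            ← Real.rpow_mul hC.le, one_div_mul_cancel hα.ne', Real.rpow_one]
  · -- tsum bound
    have hsum1 : Summable (fun j => C * q ^ j) :=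
      (summable_geometric_of_lt_one hq0.le hq1).mul_left C
    have hle : ∀ j, r j ^ α ≤ C * q ^ j := by
      intro j
      have hle0 : r j ≤ c * (1/2)^j := by
        have hnn : 0 ≤ min (g j) (c * (1/2:ℝ)^j) :=
          le_min (hgpos j).le (mul_nonneg hc.le (by positivity))
        have hmr := min_le_right (g j) (c * (1/2:ℝ)^j)
        rw [hr]
        dsimp only
        linarith
      calc r j ^ α ≤ (c * (1/2)^j) ^ α :=
            Real.rpow_le_rpow (hrpos j).le hle0 hα.le
        _ = c ^ α * ((1/2:ℝ)^j) ^ α := Real.mul_rpow hc.le (by positivity)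
        _ = C * q ^ j := by
            rw [hcdef, ← Real.rpow_natCast (1/2 : ℝ) j, ← Real.rpow_natCast q j, hq,
              ← Real.rpow_mul (by norm_num : (0:ℝ) ≤ 1/2),
              ← Real.rpow_mul (by norm_num : (0:ℝ) ≤ 1/2), mul_comm (j:ℝ) α,
              ← Real.rpow_mul hC.le, one_div_mul_cancel hα.ne', Real.rpow_one]
    have hsum0 : Summable (fun j => r j ^ α) :=
      Summable.of_nonneg_of_le (fun j => Real.rpow_nonneg (hrpos j).le α) hle hsum1
    have h1 : ∑' j, r j ^ α ≤ ∑' j, C * q ^ j := Summable.tsum_le_tsum hle hsum0 hsum1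
    have h2 : ∑' j : ℕ, C * q ^ j = C * (1 - q)⁻¹ := by
      rw [tsum_mul_left, tsum_geometric_of_lt_one hq0.le hq1]
    have h1q : (1:ℝ) - q ≠ 0 := by linarith
    have h3 : C * (1 - q)⁻¹ = ε / 2 := by
      rw [hCdef]; field_simp
    have : ∑' j, r j ^ α ≤ ε / 2 := by rw [← h3, ← h2]; exact h1
    linarith
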